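/- Let j ∈ [n] and L = {q ∈ [m] : n_q > j}. If f ∈ S = E(X,P) is such that the restriction of f̄ to L is injective and |C_q f| > j for all q ∈ L, then f̄ restricted to L is the identity on L, and f_q ∈ E_{n_q} for all q ∈ L. -/

import Mathlib

/-- The semigroup of transformations of `X = Σ q, Fin (n q)` preserving the partition
into the blocks `C_q = {q} × [n_q]`, as a submonoid of the full transformation monoid. -/
def TXP (m : ℕ) (n : Fin m → ℕ) : Submonoid (Function.End (Σ q : Fin m, Fin (n q))) where
  carrier := {f | ∀ q : Fin m, ∃ r : Fin m, ∀ x : Σ q : Fin m, Fin (n q), x.1 = q → (f x).1 = r}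
  one_mem' := fun q => ⟨q, fun _ hx => hx⟩
  mul_mem' := by
    intro a b ha hb q
    obtain ⟨r, hr⟩ := hb q
    obtain ⟨s, hs⟩ := ha r
    exact ⟨s, fun x hx => hs _ (hr x hx)⟩

/-- The submonoid of `T(X,P)` generated by its idempotents. -/
def EXP (m : ℕ) (n : Fin m → ℕ) : Submonoid (Function.End (Σ q : Fin m, Fin (n q))) :=
  Submonoid.closure {f | f ∈ TXP m n ∧ f * f = f}

lemma comp_mem_E' {α : Type*} [Finite α] {g₁ g₂ : α → α}
    (h1 : g₁ = id ∨ ¬ Function.Bijective g₁) (h2 : g₂ = id ∨ ¬ Function.Bijective g₂) :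
    g₁ ∘ g₂ = id ∨ ¬ Function.Bijective (g₁ ∘ g₂) := by
  rcases h1 with rfl | h1
  · simpa using h2
  · exact Or.inr fun hb => h1 ((Finite.surjective_iff_bijective).mp hb.surjective.of_comp)

lemma idem_mem_E' {α : Type*} {g : α → α} (hg : ∀ a, g (g a) = g a) :
    g = id ∨ ¬ Function.Bijective g := by
  by_cases hb : Function.Bijective g
  · exact Or.inl (funext fun a => hb.injective (hg a))
  · exact Or.inr hb

lemma fin_cast_heq' {a b : ℕ} (h : a = b) (x : Fin a) : HEq (Fin.cast h x) x := by
  subst h; rfl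

lemma mem_range_sigma_mk' {m : ℕ} {n : Fin m → ℕ} (x : Σ q : Fin m, Fin (n q)) {r : Fin m}
    (h : x.1 = r) : x ∈ Set.range (@Sigma.mk (Fin m) (fun q => Fin (n q)) r) := by
  subst h; exact ⟨x.2, rfl⟩

/-- Let `j ∈ [n]` and `L = {q ∈ [m] : n_q > j}`. If `f ∈ S = E(X,P)` is such that `f̄|_L` is
injective and `|C_q f| > j` for all `q ∈ L`, then `f̄|_L = id_L` and `f_q ∈ E_{n_q}` for all
`q ∈ L`. -/
theorem fbar_identity_on_large_blocks (m : ℕ) (n : Fin m → ℕ)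
    (hmono : ∀ p q : Fin m, p ≤ q → n q ≤ n p)
    (j : ℕ) (hj1 : 1 ≤ j) (hjn : j ≤ ∑ q : Fin m, n q)
    (f : Function.End (Σ q : Fin m, Fin (n q))) (hf : f ∈ EXP m n)
    (fbar : Fin m → Fin m)
    (hfbar : ∀ x : Σ q : Fin m, Fin (n q), (f x).1 = fbar x.1)
    (hinj : Set.InjOn fbar {q : Fin m | j < n q})
    (hbig : ∀ q : Fin m, j < n q →
      j < (Set.range fun a : Fin (n q) => f ⟨q, a⟩).ncard) :
    ∀ q : Fin m, j < n q →
      fbar q = q ∧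
      ∃ g : Fin (n q) → Fin (n q), (g = id ∨ ¬ Function.Bijective g) ∧
        ∀ a : Fin (n q), f ⟨q, a⟩ = ⟨q, g a⟩ := by
  classical
  obtain ⟨l, hl, hlprod⟩ := Submonoid.exists_list_of_mem_closure hf
  -- block preservation for elements of TXP
  have hTXP : ∀ h : Function.End (Σ q : Fin m, Fin (n q)), h ∈ TXP m n →
      ∀ x y : Σ q : Fin m, Fin (n q), x.1 = y.1 → (h x).1 = (h y).1 := by
    intro h hh x y hxy
    obtain ⟨r, hr⟩ := hh x.1
    rw [hr x rfl, hr y hxy.symm]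
  have hlT : ∀ e ∈ l, e ∈ TXP m n := fun e he => (hl e he).1
  have hlI : ∀ e ∈ l, e * e = e := fun e he => (hl e he).2
  -- suffix products are in TXP
  have hsufT : ∀ t : List (Function.End (Σ q : Fin m, Fin (n q))),
      (∀ e ∈ t, e ∈ l) → t.prod ∈ TXP m n := fun t ht =>
    Submonoid.list_prod_mem _ (fun e he => hlT e (ht e he))
  -- factorization of f through suffixes
  have hfact : ∀ s t : List (Function.End (Σ q : Fin m, Fin (n q))), l = s ++ t →
      ∀ x, f x = s.prod (t.prod x) := by
    intro s t hst x
    rw [← hlprod, hst, List.prod_append]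
    rfl
  -- "maps to": blocks along the trajectory stay large
  have mapsTo : ∀ s t : List (Function.End (Σ q : Fin m, Fin (n q))), l = s ++ t →
      ∀ q : Fin m, j < n q → ∀ a : Fin (n q), j < n ((t.prod ⟨q, a⟩).1) := by
    intro s t hst q hq a
    set F := t.prod with hF
    set G := s.prod with hG
    have hFT : F ∈ TXP m n := hsufT t (fun e he => by rw [hst]; exact List.mem_append_right _ he)
    set r := (F ⟨q, a⟩).1 with hr
    have h1 : (Set.range fun b : Fin (n q) => f ⟨q, b⟩)
        = G '' (Set.range fun b : Fin (n q) => F ⟨q, b⟩) := by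
      refine Eq.trans ?_ (Set.range_comp (g := G) (f := fun b : Fin (n q) => F ⟨q, b⟩))
      exact congrArg Set.range (funext fun b => hfact s t hst ⟨q, b⟩)
    have h2 : j < (Set.range fun b : Fin (n q) => F ⟨q, b⟩).ncard := by
      have := hbig q hq
      rw [h1] at this
      exact lt_of_lt_of_le this (Set.ncard_image_le (Set.finite_range _))
    have h3 : (Set.range fun b : Fin (n q) => F ⟨q, b⟩) ⊆ Set.range (@Sigma.mk (Fin m) (fun q => Fin (n q)) r) := by
      rintro x ⟨b, rfl⟩
      exact mem_range_sigma_mk' _ (hTXP F hFT ⟨q, b⟩ ⟨q, a⟩ rfl)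
    have h4 : (Set.range (@Sigma.mk (Fin m) (fun q => Fin (n q)) r)).ncard ≤ n r := by
      rw [← Set.image_univ]
      calc ((@Sigma.mk (Fin m) (fun q => Fin (n q)) r) '' Set.univ).ncard
          ≤ (Set.univ : Set (Fin (n r))).ncard := Set.ncard_image_le Set.finite_univ
        _ = n r := by rw [Set.ncard_univ, Nat.card_eq_fintype_card, Fintype.card_fin]
    exact lt_of_lt_of_le h2 (le_trans (Set.ncard_le_ncard h3 (Set.toFinite _)) h4)
  -- injectivity of the induced block map of any suffix, on the large blocks
  have injOn : ∀ s t : List (Function.End (Σ q : Fin m, Fin (n q))), l = s ++ t →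
      ∀ q q' : Fin m, j < n q → j < n q' → ∀ (a : Fin (n q)) (a' : Fin (n q')),
        (t.prod ⟨q, a⟩).1 = (t.prod ⟨q', a'⟩).1 → q = q' := by
    intro s t hst q q' hq hq' a a' heq
    have hGT : s.prod ∈ TXP m n :=
      hsufT s (fun e he => by rw [hst]; exact List.mem_append_left _ he)
    have h1 : fbar q = fbar q' := by
      rw [← hfbar ⟨q, a⟩, ← hfbar ⟨q', a'⟩, hfact s t hst, hfact s t hst]
      exact hTXP _ hGT _ _ heq
    exact hinj hq hq' h1
  -- main induction over suffixes
  have key : ∀ (t s : List (Function.End (Σ q : Fin m, Fin (n q)))), l = s ++ t →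
      ∀ q : Fin m, j < n q → ∃ g : Fin (n q) → Fin (n q),
        (g = id ∨ ¬ Function.Bijective g) ∧ ∀ a : Fin (n q), t.prod ⟨q, a⟩ = ⟨q, g a⟩ := by
    intro t
    induction t with
    | nil =>
      intro s _ q hq
      exact ⟨id, Or.inl rfl, fun a => rfl⟩
    | cons e t ih =>
      intro s hst q hq
      have hst' : l = (s ++ [e]) ++ t := by rw [hst, List.append_assoc]; rfl
      obtain ⟨gt, hgtE, hgt⟩ := ih (s ++ [e]) hst' q hq
      have hel : e ∈ l := by rw [hst]; exact List.mem_append_right _ List.mem_cons_self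
      have heT : e ∈ TXP m n := hlT e hel
      have heI : e * e = e := hlI e hel
      have hp : ∀ x, (e :: t).prod x = e (t.prod x) := fun x => by
        rw [List.prod_cons]; rfl
      have ha0 : 0 < n q := by omega
      set a0 : Fin (n q) := ⟨0, ha0⟩ with ha0def
      set r := (e ⟨q, gt a0⟩).1 with hrdef
      have hr1 : ((e :: t).prod ⟨q, a0⟩).1 = r := by rw [hp, hgt]
      have hrL : j < n r := by rw [← hr1]; exact mapsTo s (e :: t) hst q hq a0
      have hb0 : 0 < n r := by omega
      set b0 : Fin (n r) := ⟨0, hb0⟩ with hb0def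
      obtain ⟨gr, _, hgr⟩ := ih (s ++ [e]) hst' r hrL
      -- idempotence: e fixes its image point
      have hidem : ∀ x, e (e x) = e x := fun x => congrFun heI x
      have hey : e (e ⟨q, gt a0⟩) = e ⟨q, gt a0⟩ := hidem _
      have hr2 : ((e :: t).prod ⟨r, b0⟩).1 = r := by
        rw [hp, hgr]
        have : (e ⟨r, gr b0⟩).1 = (e (e ⟨q, gt a0⟩)).1 := hTXP e heT _ _ rfl
        rw [this, hey]
      have hrq : r = q := injOn s (e :: t) hst r q hrL hq b0 a0 (by rw [hr1, hr2])
      -- every point of block q goes back to block q under e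
      have hblk : ∀ c : Fin (n q), (e ⟨q, c⟩).1 = q := by
        intro c
        have := hTXP e heT ⟨q, c⟩ ⟨q, gt a0⟩ rfl
        rw [this, ← hrdef, hrq]
      set h' : Fin (n q) → Fin (n q) :=
        fun c => Fin.cast (congrArg n (hblk c)) (e ⟨q, c⟩).2 with hh'
      have hsig : ∀ c : Fin (n q), e ⟨q, c⟩ = ⟨q, h' c⟩ :=
        fun c => Sigma.ext (hblk c) (HEq.symm (fin_cast_heq' (congrArg n (hblk c)) (e ⟨q, c⟩).2))
      have hidem' : ∀ c, h' (h' c) = h' c := by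
        intro c
        have h2 : (⟨q, h' (h' c)⟩ : Σ q : Fin m, Fin (n q)) = ⟨q, h' c⟩ := by
          rw [← hsig (h' c), ← hsig c]; exact hidem _
        simpa using h2
      refine ⟨h' ∘ gt, comp_mem_E' (idem_mem_E' hidem') hgtE, fun a => ?_⟩
      rw [hp, hgt, hsig]
      rfl
  intro q hq
  obtain ⟨g, hgE, hg⟩ := key l [] rfl q hq
  rw [hlprod] at hg
  have ha0 : 0 < n q := by omega
  constructor
  · rw [← hfbar ⟨q, ⟨0, ha0⟩⟩, hg]
  · exact ⟨g, hgE, hg⟩
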